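/- Let V be a ℂ-vector space, let W and F be ℂ-subspaces of V with F + W = V, and let Λ be a subgroup of the additive group of V. Let D ⊆ W be the subgroup of W generated by Λ ∩ W and F ∩ W. Then: (1) for every y ∈ Λ there exists z ∈ F with y − z ∈ W; (2) there is a unique group homomorphism h : Λ/(Λ ∩ W) → W/D such that for every y ∈ Λ and every z ∈ F with y − z ∈ W, h sends the class of y to the class of y − z. (This is the well-definedness of the homomorphism 𝓕_ét = gr^W_0 H_ℤ → G = W_{−1}H_ℤ\W_{−1}H_V/F^0W_{−1}H_V, x ↦ y − z, appearing in the construction of the functor 𝓗₁ → 𝓜₁, applied with V = H_V, W = W_{−1}H_V, F = F^0H_V, and Λ the image of H_ℤ in H_V.) -/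
import Mathlib


/-!
STATEMENT 3: Let `V` be a `ℂ`-vector space, `W`, `F` subspaces with `F + W = V`, and
`Λ` a subgroup of `(V, +)`.  Let `D ⊆ W` be the subgroup generated by `Λ ∩ W` and
`F ∩ W`.  Then:
(1) for every `y ∈ Λ` there is `z ∈ F` with `y − z ∈ W`;
(2) there is a unique group homomorphism `h : Λ/(Λ ∩ W) → W/D` sending the class of
`y` to the class of `y − z` for any such `z`.
-/

theorem albanese_etale_part_well_defined
    (V : Type*) [AddCommGroup V] [Module ℂ V]
    (W F : Submodule ℂ V) (hFW : F ⊔ W = ⊤)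
    (Λ : AddSubgroup V)
    -- `D` : the subgroup of `W` generated by `Λ ∩ W` and `F ∩ W`
    (D : AddSubgroup W)
    (hD : D = AddSubgroup.closure
      ({x : W | (x : V) ∈ Λ} ∪ {x : W | (x : V) ∈ F})) :
    (∀ y ∈ Λ, ∃ z ∈ F, y - z ∈ W) ∧
    (∃! h : (Λ ⧸ W.toAddSubgroup.addSubgroupOf Λ) →+ (W ⧸ D),
      ∀ (y : Λ) (z : V) (hz : z ∈ F) (hyz : (y : V) - z ∈ W),
        h (QuotientAddGroup.mk y) = QuotientAddGroup.mk ⟨(y : V) - z, hyz⟩) := by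
  have hΛD : ∀ x : W, (x : V) ∈ Λ → x ∈ D := fun x hx => by
    rw [hD]; exact AddSubgroup.subset_closure (Or.inl hx)
  have hFD : ∀ x : W, (x : V) ∈ F → x ∈ D := fun x hx => by
    rw [hD]; exact AddSubgroup.subset_closure (Or.inr hx)
  have hex : ∀ y : V, ∃ z ∈ F, y - z ∈ W := by
    intro y
    have hy : y ∈ F ⊔ W := by rw [hFW]; trivial
    obtain ⟨z, hz, w, hw, rfl⟩ := Submodule.mem_sup.mp hy
    exact ⟨z, hz, by simpa⟩
  choose z hzF hzW using hex
  -- the underlying function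
  have key : ∀ (y : V) (z' : V), z' ∈ F → ∀ (hyz' : y - z' ∈ W),
      (QuotientAddGroup.mk ⟨y - z y, hzW y⟩ : W ⧸ D)
        = QuotientAddGroup.mk ⟨y - z', hyz'⟩ := by
    intro y z' hz' hyz'
    refine QuotientAddGroup.eq.mpr ?_
    apply hFD
    show (-(y - z y) + (y - z')) ∈ F
    have : -(y - z y) + (y - z') = z y - z' := by abel
    rw [this]
    exact F.sub_mem (hzF y) hz'
  let g : Λ → W ⧸ D := fun y => QuotientAddGroup.mk ⟨(y : V) - z y, hzW y⟩
  have gadd : ∀ a b : Λ, g (a + b) = g a + g b := by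
    intro a b
    have hmem : ((a : V) + b) - (z a + z b) ∈ W := by
      have : ((a : V) + b) - (z a + z b) = ((a : V) - z a) + ((b : V) - z b) := by abel
      rw [this]; exact W.add_mem (hzW a) (hzW b)
    have h1 : g (a + b) = QuotientAddGroup.mk ⟨((a : V) + b) - (z a + z b), hmem⟩ :=
      key _ _ (F.add_mem (hzF (a : V)) (hzF (b : V))) hmem
    rw [show (g (a + b) : W ⧸ D) = g (a + b) from rfl, h1]
    have : (⟨((a : V) + b) - (z a + z b), hmem⟩ : W)
        = ⟨(a : V) - z a, hzW a⟩ + ⟨(b : V) - z b, hzW b⟩ := by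
      ext; push_cast; abel
    rw [this]
    rfl
  let f : Λ →+ W ⧸ D := AddMonoidHom.mk' g gadd
  have hker : ∀ y ∈ W.toAddSubgroup.addSubgroupOf Λ, f y = 0 := by
    intro y hy
    have hyW : (y : V) ∈ W := hy
    have hzyW : z (y : V) ∈ W := by
      have : z (y : V) = (y : V) - ((y : V) - z (y : V)) := by abel
      rw [this]; exact W.sub_mem hyW (hzW (y : V))
    show (QuotientAddGroup.mk ⟨(y : V) - z (y : V), hzW (y : V)⟩ : W ⧸ D) = 0
    rw [QuotientAddGroup.eq_zero_iff]
    have : (⟨(y : V) - z (y : V), hzW (y : V)⟩ : W)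
        = ⟨(y : V), hyW⟩ - ⟨z (y : V), hzyW⟩ := rfl
    rw [this]
    exact D.sub_mem (hΛD _ y.2) (hFD _ (hzF (y : V)))
  refine ⟨fun y hy => ⟨z y, hzF y, hzW y⟩, ?_⟩
  refine ⟨QuotientAddGroup.lift _ f hker, ?_, ?_⟩
  · intro y z' hz' hyz'
    have : QuotientAddGroup.lift _ f hker (QuotientAddGroup.mk y) = f y := rfl
    rw [this]
    exact key (y : V) z' hz' hyz'
  · intro h' hh'
    refine DFunLike.ext _ _ fun q => ?_
    obtain ⟨y, rfl⟩ := QuotientAddGroup.mk_surjective q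
    rw [hh' y (z (y : V)) (hzF (y : V)) (hzW (y : V))]
    rfl
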